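/- Let C be a closed cone with nonempty interior in a finite-dimensional real Banach space. Let f : int C → int C be order-preserving, subhomogeneous, and piecewise affine. If for some x ∈ int C the sequence f^k(x) converges to a fixed point u ∈ int C, then there exist m ∈ ℕ and 0 < γ < 1 such that ‖f^{k+m}(x) − u‖ ≤ γ‖f^k(x) − u‖ for all sufficiently large k ∈ ℕ. -/

import Mathlib

open Filter Topology Pointwise

def PiecewiseAffineOn {X : Type*} [NormedAddCommGroup X] [NormedSpace ℝ X]
    (M : Set X) (f : X → X) : Prop :=
  ∃ (m : ℕ) (P : Fin m → Set X),
    M ⊆ ⋃ i, P i ∧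
    (∀ i, IsClosed (P i) ∧ Convex ℝ (P i)) ∧
    (∀ i, ∃ (A : X →ₗ[ℝ] X) (b : X), ∀ x ∈ P i ∩ M, f x = A x + b)

set_option maxHeartbeats 1600000 in
theorem piecewise_affine_cone_linear_convergence
    {X : Type*} [NormedAddCommGroup X] [NormedSpace ℝ X] [FiniteDimensional ℝ X]
    (C : Set X) (hC_closed : IsClosed C) (hC_convex : Convex ℝ C)
    (hC_cone : ∀ x ∈ C, ∀ t : ℝ, 0 ≤ t → t • x ∈ C)
    (hC_pointed : ∀ x, x ∈ C → -x ∈ C → x = 0)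
    (hC_int : (interior C).Nonempty)
    (f : X → X)
    (hf_maps : ∀ x ∈ interior C, f x ∈ interior C)
    (hf_mono : ∀ x ∈ interior C, ∀ y ∈ interior C, y - x ∈ C → f y - f x ∈ C)
    (hf_subhom : ∀ x ∈ interior C, ∀ t : ℝ, 1 ≤ t → t • f x - f (t • x) ∈ C)
    (hf_pa : PiecewiseAffineOn (interior C) f)
    (x : X) (hx : x ∈ interior C) (u : X) (hu : u ∈ interior C) (hfu : f u = u)
    (hconv : Tendsto (fun k => f^[k] x) atTop (𝓝 u)) :
    ∃ (m : ℕ) (γ : ℝ), 0 < γ ∧ γ < 1 ∧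
      ∃ N : ℕ, ∀ k ≥ N, ‖f^[k + m] x - u‖ ≤ γ * ‖f^[k] x - u‖ := by
  classical
  by_cases hz : ∃ k, f^[k] x = u
  · -- trivial case: orbit hits u
    obtain ⟨k₀, hk₀⟩ := hz
    have hfix : ∀ k, k₀ ≤ k → f^[k] x = u := by
      intro k hk
      induction k with
      | zero => rw [Nat.le_zero] at hk; rw [hk] at hk₀; exact hk₀
      | succ n ih =>
        rcases Nat.lt_or_ge n.succ k₀ with h | h
        · omega
        · rcases Nat.lt_or_ge k₀ (n+1) with h' | h'
          · have := ih (Nat.lt_succ_iff.mp h')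
            rw [Function.iterate_succ_apply', this, hfu]
          · have : k₀ = n+1 := le_antisymm h h'
            rw [← this]; exact hk₀
    refine ⟨1, 1/2, by norm_num, by norm_num, k₀, fun k hk => ?_⟩
    rw [hfix (k+1) (le_trans hk (Nat.le_succ k)), hfix k hk]
    simp
  · push_neg at hz
    -- basic cone facts
    have huC : u ∈ C := interior_subset hu
    have hC0 : (0:X) ∈ C := by simpa using hC_cone u huC 0 le_rfl
    have hCadd : ∀ a ∈ C, ∀ b ∈ C, a + b ∈ C := by
      intro a ha b hb
      have h2 : (2:ℝ) • ((1/2:ℝ) • a + (1/2:ℝ) • b) ∈ C :=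
        hC_cone _ (hC_convex ha hb (by norm_num) (by norm_num) (by norm_num)) 2 (by norm_num)
      convert h2 using 1
      module
    have hscale : ∀ v ∈ interior C, ∀ t : ℝ, 1 ≤ t → t • v ∈ interior C := by
      intro v hv t ht
      have ht0 : (t:ℝ) ≠ 0 := by positivity
      have h1 : t • v ∈ t • interior C := Set.smul_mem_smul_set hv
      rw [← interior_smul₀ ht0] at h1
      refine interior_mono ?_ h1
      rintro z ⟨w, hw, rfl⟩
      exact hC_cone w hw t (by linarith)
    have horb : ∀ k, f^[k] x ∈ interior C := by
      intro k; induction k with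
      | zero => simpa using hx
      | succ n ih => rw [Function.iterate_succ_apply']; exact hf_maps _ ih
    obtain ⟨r, hr, hball⟩ : ∃ r > 0, Metric.ball u r ⊆ C := by
      obtain ⟨ε, hε, h⟩ := Metric.mem_nhds_iff.mp (mem_interior_iff_mem_nhds.mp hu)
      exact ⟨ε, hε, h⟩
    -- the order-unit "norm" N
    set NS : X → Set ℝ := fun w => {s : ℝ | 0 ≤ s ∧ s • u - w ∈ C ∧ s • u + w ∈ C} with hNSdef
    have hNS2 : ∀ w : X, w ≠ 0 → 2 / r * ‖w‖ ∈ NS w := by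
      intro w hw
      have hnw : (0:ℝ) < ‖w‖ := norm_pos_iff.mpr hw
      set s : ℝ := 2 / r * ‖w‖ with hs
      have hs0 : 0 < s := by positivity
      have hsne : s ≠ 0 := ne_of_gt hs0
      have hmem : ∀ v : X, ‖v‖ = ‖w‖ → u - s⁻¹ • v ∈ C := by
        intro v hv
        apply hball
        rw [Metric.mem_ball, dist_eq_norm]
        have h : u - s⁻¹ • v - u = -(s⁻¹ • v) := by abel
        rw [h, norm_neg, norm_smul, norm_inv, Real.norm_eq_abs, abs_of_pos hs0, hv, hs]
        have he : (2 / r * ‖w‖)⁻¹ * ‖w‖ = r / 2 := by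
          field_simp
        rw [he]
        linarith
      refine ⟨le_of_lt hs0, ?_, ?_⟩
      · have h := hC_cone _ (hmem w rfl) s (le_of_lt hs0)
        have he : s • (u - s⁻¹ • w) = s • u - w := by
          rw [smul_sub, smul_inv_smul₀ hsne]
        rwa [he] at h
      · have h := hC_cone _ (hmem (-w) (by simp)) s (le_of_lt hs0)
        have he : s • (u - s⁻¹ • (-w)) = s • u + w := by
          rw [smul_sub, smul_inv_smul₀ hsne]; abel
        rwa [he] at h
    have hNS0 : (0:ℝ) ∈ NS 0 := ⟨le_rfl, by simp [hC0], by simp [hC0]⟩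
    have hNSne : ∀ w : X, (NS w).Nonempty := by
      intro w
      by_cases hw : w = 0
      · exact ⟨0, hw ▸ hNS0⟩
      · exact ⟨_, hNS2 w hw⟩
    have hNSclosed : ∀ w : X, IsClosed (NS w) := by
      intro w
      have h : NS w = Set.Ici (0:ℝ) ∩ ((fun s : ℝ => s • u - w) ⁻¹' C ∩ (fun s : ℝ => s • u + w) ⁻¹' C) := by
        ext t; simp [hNSdef, Set.mem_Ici, and_assoc]
      rw [h]
      refine isClosed_Ici.inter (IsClosed.inter ?_ ?_)
      · exact hC_closed.preimage ((continuous_id.smul continuous_const).sub continuous_const)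
      · exact hC_closed.preimage ((continuous_id.smul continuous_const).add continuous_const)
    have hNSbdd : ∀ w : X, BddBelow (NS w) := fun w => ⟨0, fun s hs => hs.1⟩
    set N : X → ℝ := fun w => sInf (NS w) with hNdef
    have hNmem : ∀ w : X, N w ∈ NS w := fun w =>
      (hNSclosed w).csInf_mem (hNSne w) (hNSbdd w)
    have hNle : ∀ w : X, ∀ s ∈ NS w, N w ≤ s := fun w s hs => csInf_le (hNSbdd w) hs
    have hN0 : ∀ w : X, 0 ≤ N w := fun w => (hNmem w).1
    have hNzero : ∀ w : X, N w = 0 → w = 0 := by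
      intro w h
      have h1 := (hNmem w).2.1
      have h2 := (hNmem w).2.2
      rw [h, zero_smul, zero_sub] at h1
      rw [h, zero_smul, zero_add] at h2
      exact hC_pointed w h2 h1
    have hNnormle : ∀ w : X, N w ≤ 2 / r * ‖w‖ := by
      intro w
      by_cases hw : w = 0
      · subst hw; simpa using hNle 0 0 hNS0
      · exact hNle w _ (hNS2 w hw)
    have hNsub : ∀ a b : X, N (a + b) ≤ N a + N b := by
      intro a b
      refine hNle _ _ ⟨add_nonneg (hN0 a) (hN0 b), ?_, ?_⟩
      · have h := hCadd _ (hNmem a).2.1 _ (hNmem b).2.1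
        have he : N a • u - a + (N b • u - b) = (N a + N b) • u - (a + b) := by
          rw [add_smul]; abel
        rwa [he] at h
      · have h := hCadd _ (hNmem a).2.2 _ (hNmem b).2.2
        have he : N a • u + a + (N b • u + b) = (N a + N b) • u + (a + b) := by
          rw [add_smul]; abel
        rwa [he] at h
    have hNneg : ∀ w : X, N (-w) = N w := by
      have key : ∀ w : X, NS (-w) = NS w := by
        intro w; ext t
        simp only [hNSdef, Set.mem_setOf_eq, sub_neg_eq_add]
        constructor
        · rintro ⟨h1, h2, h3⟩; refine ⟨h1, ?_, h2⟩; convert h3 using 1; abel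
        · rintro ⟨h1, h2, h3⟩; refine ⟨h1, h3, ?_⟩; convert h2 using 1; abel
      intro w; rw [hNdef]; simp only [key]
    have hNsmul_le : ∀ (t : ℝ), 0 ≤ t → ∀ w : X, N (t • w) ≤ t * N w := by
      intro t ht w
      refine hNle _ _ ⟨mul_nonneg ht (hN0 w), ?_, ?_⟩
      · have h := hC_cone _ (hNmem w).2.1 t ht
        have he : t • (N w • u - w) = (t * N w) • u - t • w := by
          rw [smul_sub, smul_smul]
        rwa [he] at h
      · have h := hC_cone _ (hNmem w).2.2 t ht
        have he : t • (N w • u + w) = (t * N w) • u + t • w := by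
          rw [smul_add, smul_smul]
        rwa [he] at h
    have hNsmul : ∀ (t : ℝ), 0 < t → ∀ w : X, N (t • w) = t * N w := by
      intro t ht w
      refine le_antisymm (hNsmul_le t (le_of_lt ht) w) ?_
      have h := hNsmul_le t⁻¹ (by positivity) (t • w)
      rw [inv_smul_smul₀ (ne_of_gt ht)] at h
      calc t * N w ≤ t * (t⁻¹ * N (t • w)) := by
            exact mul_le_mul_of_nonneg_left h (le_of_lt ht)
        _ = N (t • w) := by field_simp
    have hNcont : Continuous N := by
      have hlip : ∀ a b : X, N a - N b ≤ 2 / r * ‖a - b‖ := by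
        intro a b
        have h := hNsub b (a - b)
        rw [add_sub_cancel] at h
        have := hNnormle (a - b)
        linarith
      rw [Metric.continuous_iff]
      intro a ε hε
      set q : ℝ := 2 / r with hqdef
      have hq : 0 < q := by positivity
      refine ⟨ε / (q + 1), by positivity, fun b hb => ?_⟩
      rw [Real.dist_eq]
      rw [dist_eq_norm] at hb
      have h1 := hlip b a
      have h2 := hlip a b
      have hba : ‖a - b‖ = ‖b - a‖ := by rw [← neg_sub, norm_neg]
      have hkey : q * (ε / (q + 1)) < ε := by
        rw [mul_div_assoc', div_lt_iff₀ (by linarith)]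
        nlinarith
      have hm := mul_lt_mul_of_pos_left hb hq
      rw [hba] at h2
      rw [abs_lt]
      constructor <;> linarith
    -- lower norm equivalence (finite dimensionality)
    have hNlower : ∃ c > 0, ∀ w : X, ‖w‖ ≤ c * N w := by
      by_contra hc
      push_neg at hc
      have hch : ∀ n : ℕ, ∃ z : X, ‖z‖ = 1 ∧ N z < ((n:ℝ)+1)⁻¹ := by
        intro n
        obtain ⟨w, hw⟩ := hc ((n:ℝ)+1) (by positivity)
        have hw0 : w ≠ 0 := by
          intro h
          rw [h] at hw
          simp only [norm_zero] at hw
          nlinarith [hN0 (0:X)]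
        have hnw : (0:ℝ) < ‖w‖ := norm_pos_iff.mpr hw0
        refine ⟨‖w‖⁻¹ • w, ?_, ?_⟩
        · rw [norm_smul]; simp [abs_of_pos hnw, inv_mul_cancel₀ (ne_of_gt hnw)]
        · rw [hNsmul _ (by positivity)]
          rw [inv_mul_lt_iff₀ hnw, ← div_eq_mul_inv, lt_div_iff₀ (by positivity : (0:ℝ) < (n:ℝ)+1)]
          linarith [mul_comm ((n:ℝ)+1) (N w)]
      choose zf hzf1 hzf2 using hch
      have hzb : ∀ n, zf n ∈ Metric.closedBall (0:X) 1 := by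
        intro n
        rw [Metric.mem_closedBall, dist_zero_right, hzf1 n]
      obtain ⟨zs, _, φ, hφ, htd⟩ := tendsto_subseq_of_bounded Metric.isBounded_closedBall hzb
      have hNz : Tendsto (fun n => N (zf (φ n))) atTop (𝓝 (N zs)) :=
        (hNcont.tendsto zs).comp htd
      have hinv : Tendsto (fun n : ℕ => ((n:ℝ)+1)⁻¹) atTop (𝓝 0) := by
        simpa [one_div] using tendsto_one_div_add_atTop_nhds_zero_nat (𝕜 := ℝ)
      have hNzs : N zs ≤ 0 := by
        refine le_of_tendsto_of_tendsto' hNz hinv (fun n => ?_)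
        have h1 : N (zf (φ n)) < ((φ n : ℝ)+1)⁻¹ := hzf2 (φ n)
        have h2 : ((φ n : ℝ)+1)⁻¹ ≤ ((n:ℝ)+1)⁻¹ := by
          apply inv_anti₀ (by positivity)
          have h3 : (n:ℝ) ≤ (φ n : ℝ) := Nat.cast_le.mpr hφ.le_apply
          linarith
        linarith
      have hzs0 : zs = 0 := hNzero zs (le_antisymm hNzs (hN0 zs))
      have hn1 : Tendsto (fun n => ‖zf (φ n)‖) atTop (𝓝 ‖zs‖) := htd.norm
      have : ‖zs‖ = 1 := by
        have heq : (fun n : ℕ => ‖zf (φ n)‖) = fun _ : ℕ => (1:ℝ) := by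
          funext n; exact hzf1 (φ n)
        rw [heq] at hn1
        exact (tendsto_nhds_unique hn1 tendsto_const_nhds)
      rw [hzs0] at this
      simp at this
    obtain ⟨c, hc, hclow⟩ := hNlower
    -- the orbit
    set y : ℕ → X := fun k => f^[k] x - u with hydef
    have hyk : ∀ k, f^[k] x = u + y k := by
      intro k; simp [hydef]
    have hyn : ∀ k, y k ≠ 0 := by
      intro k h
      apply hz k
      have := hyk k
      rw [h, add_zero] at this
      exact this
    have hNypos : ∀ k, 0 < N (y k) := by
      intro k
      rcases lt_or_eq_of_le (hN0 (y k)) with h | h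
      · exact h
      · exact absurd (hNzero _ h.symm) (hyn k)
    have hy0 : Tendsto y atTop (𝓝 0) := by
      have := hconv.sub_const u
      simpa using this
    have hyn0 : Tendsto (fun k => ‖y k‖) atTop (𝓝 0) := by
      simpa using hy0.norm
    have hNy0 : Tendsto (fun k => N (y k)) atTop (𝓝 0) :=
      squeeze_zero (fun k => hN0 _) (fun k => hNnormle _)
        (by simpa using hyn0.const_mul (2/r))
    -- pieces
    obtain ⟨m₀, P, hcov, hPc, hPaff⟩ := hf_pa
    have hloc : ∃ r₀ > 0, ∀ w : X, ‖w‖ < r₀ → u + w ∈ interior C →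
        ∃ i, u ∈ P i ∧ u + w ∈ P i := by
      have hUopen : IsOpen (⋂ i : {i : Fin m₀ // u ∉ P i}, (P i.1)ᶜ) :=
        isOpen_iInter_of_finite (fun i => (hPc i.1).1.isOpen_compl)
      have hUmem : u ∈ ⋂ i : {i : Fin m₀ // u ∉ P i}, (P i.1)ᶜ :=
        Set.mem_iInter.mpr (fun i => i.2)
      obtain ⟨r₀, hr₀, hr₀sub⟩ := Metric.isOpen_iff.mp hUopen u hUmem
      refine ⟨r₀, hr₀, fun w hw hwC => ?_⟩
      obtain ⟨i, hi⟩ := Set.mem_iUnion.mp (hcov hwC)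
      refine ⟨i, ?_, hi⟩
      by_contra hui
      have hball' : u + w ∈ Metric.ball u r₀ := by
        rw [Metric.mem_ball, dist_eq_norm]
        simpa using hw
      have := Set.mem_iInter.mp (hr₀sub hball') ⟨i, hui⟩
      exact this hi
    obtain ⟨r₀, hr₀, hlocal⟩ := hloc
    -- affine pieces through u
    have hAff : ∀ i : Fin m₀, u ∈ P i → ∃ A : X →ₗ[ℝ] X,
        ∀ w : X, u + w ∈ P i → u + w ∈ interior C → f (u + w) = u + A w := by
      intro i hui
      obtain ⟨A, b, hAb⟩ := hPaff i
      have hub : A u + b = u := by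
        rw [← hAb u ⟨hui, hu⟩, hfu]
      refine ⟨A, fun w hw hwC => ?_⟩
      rw [hAb (u + w) ⟨hw, hwC⟩, map_add]
      rw [add_assoc, add_comm (A w) b, ← add_assoc, hub]
    -- K₁ : tail smallness
    obtain ⟨K₁, hK₁⟩ : ∃ K₁, ∀ k ≥ K₁, ‖y k‖ < r₀ ∧ N (y k) ≤ 1/4 := by
      have h1 : ∀ᶠ k in atTop, ‖y k‖ < r₀ := hyn0.eventually_lt_const hr₀
      have h2 : ∀ᶠ k in atTop, N (y k) < 1/4 := hNy0.eventually_lt_const (by norm_num)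
      obtain ⟨K₁, hK⟩ := eventually_atTop.mp (h1.and h2)
      exact ⟨K₁, fun k hk => ⟨(hK k hk).1, le_of_lt (hK k hk).2⟩⟩
    -- the exactly-monotone Thompson-type quantity a
    set AS : ℕ → Set ℝ := fun k =>
      {t : ℝ | 0 ≤ t ∧ (1+t) • u - f^[k] x ∈ C ∧ (1+t) • f^[k] x - u ∈ C} with hASdef
    have hASclosed : ∀ k, IsClosed (AS k) := by
      intro k
      have h : AS k = Set.Ici (0:ℝ) ∩ ((fun t : ℝ => (1+t) • u - f^[k] x) ⁻¹' C ∩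
          (fun t : ℝ => (1+t) • f^[k] x - u) ⁻¹' C) := by
        ext t; simp [hASdef, Set.mem_Ici, and_assoc]
      rw [h]
      refine isClosed_Ici.inter (IsClosed.inter ?_ ?_)
      · exact hC_closed.preimage (((continuous_const.add continuous_id).smul
          continuous_const).sub continuous_const)
      · exact hC_closed.preimage (((continuous_const.add continuous_id).smul
          continuous_const).sub continuous_const)
    have hASbdd : ∀ k, BddBelow (AS k) := fun k => ⟨0, fun t ht => ht.1⟩
    have hASwit : ∀ k ≥ K₁, 2 * N (y k) ∈ AS k := by
      intro k hk
      refine ⟨mul_nonneg (by norm_num) (hN0 _), ?_, ?_⟩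
      · rw [hyk k]
        have hd : (1 + 2 * N (y k)) • u - (u + y k)
            = N (y k) • u + (N (y k) • u - y k) := by module
        rw [hd]
        exact hCadd _ (hC_cone _ huC _ (hN0 _)) _ (hNmem (y k)).2.1
      · rw [hyk k]
        have hd : (1 + 2 * N (y k)) • (u + y k) - u
            = (N (y k) * (1 - 2 * N (y k))) • u
              + (1 + 2 * N (y k)) • (N (y k) • u + y k) := by module
        rw [hd]
        refine hCadd _ (hC_cone _ huC _ ?_) _ (hC_cone _ ?_ _ ?_)
        · have h4 := (hK₁ k hk).2
          nlinarith [hN0 (y k)]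
        · exact (hNmem (y k)).2.2
        · nlinarith [hN0 (y k)]
    have hASne : ∀ k ≥ K₁, (AS k).Nonempty := fun k hk => ⟨_, hASwit k hk⟩
    set a : ℕ → ℝ := fun k => sInf (AS k) with hadef
    have haMem : ∀ k ≥ K₁, a k ∈ AS k := fun k hk =>
      (hASclosed k).csInf_mem (hASne k hk) (hASbdd k)
    have haLe : ∀ k, ∀ t ∈ AS k, a k ≤ t := fun k t ht => csInf_le (hASbdd k) ht
    -- one-step monotonicity of a
    have haMono : ∀ k ≥ K₁, a (k+1) ≤ a k := by
      intro k hk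
      obtain ⟨ht0, hc1, hc2⟩ := haMem k hk
      set t := a k with htdef
      have hlam : (1:ℝ) ≤ 1 + t := by linarith
      have hvk : f^[k] x ∈ interior C := horb k
      have hsu : (1+t) • u ∈ interior C := hscale u hu _ hlam
      have hsv : (1+t) • f^[k] x ∈ interior C := hscale _ hvk _ hlam
      refine haLe _ _ ⟨ht0, ?_, ?_⟩
      · rw [Function.iterate_succ_apply']
        have s1 : f ((1+t) • u) - f (f^[k] x) ∈ C := hf_mono _ hvk _ hsu hc1
        have s2 : (1+t) • f u - f ((1+t) • u) ∈ C := hf_subhom u hu _ hlam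
        rw [hfu] at s2
        have hd : (1+t) • u - f (f^[k] x)
            = ((1+t) • u - f ((1+t) • u)) + (f ((1+t) • u) - f (f^[k] x)) := by abel
        rw [hd]
        exact hCadd _ s2 _ s1
      · rw [Function.iterate_succ_apply']
        have s1 : f ((1+t) • f^[k] x) - f u ∈ C := hf_mono _ hu _ hsv hc2
        have s2 : (1+t) • f (f^[k] x) - f ((1+t) • f^[k] x) ∈ C := hf_subhom _ hvk _ hlam
        rw [hfu] at s1
        have hd : (1+t) • f (f^[k] x) - u
            = ((1+t) • f (f^[k] x) - f ((1+t) • f^[k] x)) + (f ((1+t) • f^[k] x) - u) := by abel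
        rw [hd]
        exact hCadd _ s2 _ s1
    have haMono' : ∀ k l, K₁ ≤ k → k ≤ l → a l ≤ a k := by
      intro k l hk hkl
      induction l with
      | zero =>
        have hk0 : k = 0 := Nat.le_zero.mp hkl
        rw [hk0]
      | succ n ih =>
        rcases Nat.lt_or_ge n k with h | h
        · have he : k = n + 1 := by omega
          rw [he]
        · exact le_trans (haMono n (le_trans hk h)) (ih h)
    -- a vs N
    have haN : ∀ k ≥ K₁, N (y k) ≤ a k := by
      intro k hk
      obtain ⟨ht0, hc1, hc2⟩ := haMem k hk
      rw [hyk k] at hc1 hc2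
      refine hNle _ _ ⟨ht0, ?_, ?_⟩
      · have hd : a k • u - y k = (1 + a k) • u - (u + y k) := by module
        rw [hd]; exact hc1
      · -- from (1+t)(u+y)-u ∈ C get t•u + y ∈ C
        have h1 : (1 + a k)⁻¹ • ((1 + a k) • (u + y k) - u) ∈ C :=
          hC_cone _ hc2 _ (by positivity)
        have hne : (1 + a k) ≠ 0 := by positivity
        have hd : (1 + a k)⁻¹ • ((1 + a k) • (u + y k) - u)
            = (1 - (1 + a k)⁻¹) • u + y k := by
          rw [smul_sub, inv_smul_smul₀ hne]
          module
        rw [hd] at h1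
        have hd2 : a k • u + y k = ((1 - (1 + a k)⁻¹) • u + y k)
            + (a k - (1 - (1 + a k)⁻¹)) • u := by module
        rw [hd2]
        refine hCadd _ h1 _ (hC_cone _ huC _ ?_)
        have hlt : (1 + a k)⁻¹ ≥ 1 - a k := by
          rw [ge_iff_le, ← sub_nonneg]
          have h2 : (1 + a k)⁻¹ - (1 - a k) = (a k * a k) / (1 + a k) := by
            field_simp
            ring
          rw [h2]
          positivity
        linarith
    have haN2 : ∀ k ≥ K₁, a k ≤ 2 * N (y k) := fun k hk => haLe _ _ (hASwit k hk)
    -- main case split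
    by_cases hcase : ∃ m, ∃ N', K₁ ≤ N' ∧ ∀ k ≥ N', N (y (k+m)) ≤ N (y k) / 32
    · -- Case A : contraction by 1/32 every m steps
      obtain ⟨m, N', hN'K, h32⟩ := hcase
      have hm : 1 ≤ m := by
        by_contra hm0
        have hm0' : m = 0 := by omega
        have := h32 N' le_rfl
        rw [hm0', add_zero] at this
        nlinarith [hNypos N']
      have hiter : ∀ t k, k ≥ N' → N (y (k + m*t)) ≤ (1/32)^t * N (y k) := by
        intro t
        induction t with
        | zero => intro k hk; simpa using le_rfl
        | succ n ih =>
          intro k hk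
          have h1 : N (y (k + m*n + m)) ≤ N (y (k + m*n)) / 32 :=
            h32 (k + m*n) (by omega)
          have h2 := ih k hk
          have he : k + m * (n+1) = k + m*n + m := by ring
          rw [he, pow_succ]
          calc N (y (k + m*n + m)) ≤ N (y (k + m*n)) / 32 := h1
            _ ≤ ((1/32)^n * N (y k)) / 32 := by linarith
            _ = (1/32)^n * (1/32) * N (y k) := by ring
      -- choose enough iterations to beat the norm-equivalence constants
      obtain ⟨T, hT⟩ : ∃ T : ℕ, (1/32:ℝ)^T < 1 / (c * (2/r) + 1) :=
        exists_pow_lt_of_lt_one (by positivity) (by norm_num)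
      refine ⟨m * T, c * (2/r) * (1/32)^T, by positivity, ?_, N', fun k hk => ?_⟩
      · have hq : (0:ℝ) < c * (2/r) := by positivity
        have h1 : c * (2/r) * (1/32:ℝ)^T < c * (2/r) * (1 / (c * (2/r) + 1)) :=
          mul_lt_mul_of_pos_left hT hq
        have h2 : c * (2/r) * (1 / (c * (2/r) + 1)) < 1 := by
          rw [mul_one_div, div_lt_one (by linarith)]
          linarith
        linarith
      · have h1 : N (y (k + m*T)) ≤ (1/32)^T * N (y k) := hiter T k hk
        have h2 : ‖y (k + m*T)‖ ≤ c * N (y (k + m*T)) := hclow _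
        have h3 : N (y k) ≤ 2/r * ‖y k‖ := hNnormle _
        have hp : (0:ℝ) ≤ (1/32:ℝ)^T := by positivity
        have h4 : c * N (y (k + m*T)) ≤ c * ((1/32)^T * N (y k)) :=
          mul_le_mul_of_nonneg_left h1 (le_of_lt hc)
        have h5 : (1/32:ℝ)^T * N (y k) ≤ (1/32)^T * (2/r * ‖y k‖) :=
          mul_le_mul_of_nonneg_left h3 hp
        have h6 : c * ((1/32)^T * N (y k)) ≤ c * ((1/32)^T * (2/r * ‖y k‖)) :=
          mul_le_mul_of_nonneg_left h5 (le_of_lt hc)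
        show ‖y (k + m*T)‖ ≤ c * (2/r) * (1/32)^T * ‖y k‖
        calc ‖y (k + m*T)‖ ≤ c * ((1/32)^T * (2/r * ‖y k‖)) := by linarith
          _ = c * (2/r) * (1/32)^T * ‖y k‖ := by ring
    · -- Case B : no such contraction, derive a contradiction
      exfalso
      push_neg at hcase
      have hsel : ∀ j : ℕ, ∃ k, max j K₁ ≤ k ∧ N (y k) / 32 < N (y (k+j)) := by
        intro j
        obtain ⟨k, hk1, hk2⟩ := hcase j (max j K₁) (le_max_right _ _)
        exact ⟨k, hk1, hk2⟩
      choose K hK1 hK2 using hsel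
      set z : ℕ → X := fun j => (N (y (K j)))⁻¹ • y (K j) with hzdef
      have hzN : ∀ j, N (z j) = 1 := by
        intro j
        rw [hzdef]
        simp only []
        rw [hNsmul _ (inv_pos.mpr (hNypos (K j)))]
        exact inv_mul_cancel₀ (ne_of_gt (hNypos (K j)))
      have hzb : ∀ j, z j ∈ Metric.closedBall (0:X) c := by
        intro j
        rw [Metric.mem_closedBall, dist_zero_right]
        calc ‖z j‖ ≤ c * N (z j) := hclow _
          _ = c := by rw [hzN j, mul_one]
      obtain ⟨zs, _, φ, hφ, htd⟩ := tendsto_subseq_of_bounded Metric.isBounded_closedBall hzb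
      rw [Metric.tendsto_atTop] at htd
      obtain ⟨J, hJ⟩ := htd (r/8192) (by positivity)
      set p := K (φ J) with hpdef
      have hpK₁ : K₁ ≤ p := le_trans (le_max_right _ _) (hK1 (φ J))
      have hNp : 0 < N (y p) := hNypos p
      obtain ⟨M, hM⟩ := eventually_atTop.mp
        (hNy0.eventually_lt_const (show (0:ℝ) < N (y p)/2048 by positivity))
      set n := max J M with hndef
      set q := K (φ n) with hqdef
      have hqK₁ : K₁ ≤ q := le_trans (le_max_right _ _) (hK1 (φ n))
      have hNq : 0 < N (y q) := hNypos q
      have hqM : M ≤ q := by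
        have h1 : n ≤ φ n := hφ.le_apply
        have h2 : φ n ≤ max (φ n) K₁ := le_max_left _ _
        have h3 : max (φ n) K₁ ≤ q := hK1 (φ n)
        have h4 : M ≤ n := le_max_right _ _
        omega
      have hNqp' : N (y q) < N (y p) / 2048 := hM q hqM
      have hNqp : N (y q) ≤ N (y p) := by
        have : N (y p) / 2048 ≤ N (y p) := by linarith
        linarith
      set s : ℝ := N (y q) / N (y p) with hsdef
      have hs0 : 0 < s := by rw [hsdef]; positivity
      have hs1 : s ≤ 1 := by rw [hsdef, div_le_one hNp]; exact hNqp
      have hsNp : s * N (y p) = N (y q) := by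
        rw [hsdef]; field_simp
      set η : ℝ := N (y q - s • y p) with hηdef
      have hη0 : 0 ≤ η := hN0 _
      have hηle : η ≤ N (y q) / 2048 := by
        have hyq : N (y q) • z (φ n) = y q := by
          rw [hzdef]
          simp only []
          rw [← hqdef, smul_inv_smul₀ (ne_of_gt hNq)]
        have hsyp : N (y q) • z (φ J) = s • y p := by
          rw [hzdef]
          simp only []
          rw [← hpdef, smul_smul, hsdef, div_eq_mul_inv]
        have h1 : y q - s • y p = N (y q) • (z (φ n) - z (φ J)) := by
          rw [smul_sub (N (y q)) (z (φ n)) (z (φ J)), hyq, hsyp]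
        have h2 : ‖z (φ n) - z (φ J)‖ ≤ r / 4096 := by
          have d1 := hJ n (le_max_left _ _)
          have d2 := hJ J le_rfl
          simp only [Function.comp_apply] at d1 d2
          calc ‖z (φ n) - z (φ J)‖ = dist (z (φ n)) (z (φ J)) := (dist_eq_norm _ _).symm
            _ ≤ dist (z (φ n)) zs + dist (z (φ J)) zs := dist_triangle_right _ _ _
            _ ≤ r/8192 + r/8192 := by linarith [le_of_lt d1, le_of_lt d2]
            _ = r/4096 := by ring
        calc η ≤ 2/r * ‖y q - s • y p‖ := by rw [hηdef]; exact hNnormle _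
          _ = 2/r * (N (y q) * ‖z (φ n) - z (φ J)‖) := by
              rw [h1, norm_smul, Real.norm_eq_abs, abs_of_pos hNq]
          _ ≤ 2/r * (N (y q) * (r/4096)) := by
              refine mul_le_mul_of_nonneg_left ?_ (by positivity)
              exact mul_le_mul_of_nonneg_left h2 (le_of_lt hNq)
          _ = N (y q) / 2048 := by field_simp; ring
      -- interior membership of the segment points
      have hsegint : ∀ l : ℕ, u + s • y l ∈ interior C := by
        intro l
        have hint : u + y l ∈ interior C := by rw [← hyk]; exact horb _
        have h := hC_convex.interior hu hint
          (by linarith : (0:ℝ) ≤ 1-s) (le_of_lt hs0) (by ring)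
        convert h using 1
        module
      -- the segment point follows the orbit affinely
      have hseg : ∀ t : ℕ, f^[t] (u + s • y p) = u + s • y (p + t) := by
        intro t
        induction t with
        | zero => simp
        | succ tt ih =>
          have hpt : K₁ ≤ p + tt := by omega
          have hint : u + y (p+tt) ∈ interior C := by rw [← hyk]; exact horb _
          obtain ⟨i, hui, hPi⟩ := hlocal (y (p+tt)) (hK₁ _ hpt).1 hint
          obtain ⟨A, hA⟩ := hAff i hui
          have hsmem : u + s • y (p+tt) ∈ P i := by
            have h := (hPc i).2 hui hPi
              (by linarith : (0:ℝ) ≤ 1 - s) (le_of_lt hs0) (by ring)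
            convert h using 1
            module
          have hApt : A (y (p+tt)) = y (p+tt+1) := by
            have h1 := hA (y (p+tt)) hPi hint
            rw [← hyk] at h1
            have h2 : f (f^[p+tt] x) = f^[p+tt+1] x :=
              (Function.iterate_succ_apply' f _ x).symm
            rw [h2, hyk (p+tt+1)] at h1
            exact (add_left_cancel h1).symm
          have h3 := hA (s • y (p+tt)) hsmem (hsegint (p+tt))
          rw [map_smul, hApt] at h3
          rw [Function.iterate_succ_apply', ih, h3]
          rw [show p + (tt+1) = p + tt + 1 by ring]
      have hPrw : ∀ t : ℕ, f^[t] (u + y q) = u + y (q + t) := by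
        intro t
        rw [← hyk q, ← Function.iterate_add_apply, hyk, Nat.add_comm]
      have hQint : ∀ t : ℕ, f^[t] (u + s • y p) ∈ interior C := by
        intro t; rw [hseg t]; exact hsegint _
      have hPint : ∀ t : ℕ, f^[t] (u + y q) ∈ interior C := by
        intro t; rw [hPrw t, ← hyk]; exact horb _
      set lam : ℝ := 1 + 2 * η with hlamdef
      have hlam1 : (1:ℝ) ≤ lam := by rw [hlamdef]; linarith
      have hNq4 : N (y q) ≤ 1/4 := (hK₁ q hqK₁).2
      -- base case of the sandwich
      have hbase1 : lam • (u + s • y p) - (u + y q) ∈ C := by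
        have hd : lam • (u + s • y p) - (u + y q)
            = η • (u + (2*s) • y p) + (η • u - (y q - s • y p)) := by
          rw [hlamdef]; module
        rw [hd]
        refine hCadd _ (hC_cone _ ?_ _ hη0) _ (by rw [hηdef] at *; exact (hNmem _).2.1)
        have hd2 : u + (2*s) • y p
            = (1 - 2*(s*N (y p))) • u + (2*s) • (N (y p) • u + y p) := by module
        rw [hd2]
        refine hCadd _ (hC_cone _ huC _ ?_) _ (hC_cone _ (hNmem _).2.2 _ (by linarith))
        rw [hsNp]; linarith
      have hbase2 : lam • (u + y q) - (u + s • y p) ∈ C := by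
        have hd : lam • (u + y q) - (u + s • y p)
            = η • (u + (2:ℝ) • y q) + (η • u + (y q - s • y p)) := by
          rw [hlamdef]; module
        rw [hd]
        refine hCadd _ (hC_cone _ ?_ _ hη0) _ (by rw [hηdef] at *; exact (hNmem _).2.2)
        have hd2 : u + (2:ℝ) • y q
            = (1 - 2*N (y q)) • u + (2:ℝ) • (N (y q) • u + y q) := by module
        rw [hd2]
        exact hCadd _ (hC_cone _ huC _ (by linarith)) _
          (hC_cone _ (hNmem _).2.2 _ (by norm_num))
      -- the sandwich propagates
      have hpair : ∀ t : ℕ, lam • (f^[t] (u + s • y p)) - f^[t] (u + y q) ∈ C ∧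
          lam • (f^[t] (u + y q)) - f^[t] (u + s • y p) ∈ C := by
        intro t
        induction t with
        | zero => exact ⟨hbase1, hbase2⟩
        | succ tt ih =>
          have hQ := hQint tt
          have hP := hPint tt
          constructor
          · rw [Function.iterate_succ_apply', Function.iterate_succ_apply']
            have s1 : f (lam • f^[tt] (u + s • y p)) - f (f^[tt] (u + y q)) ∈ C :=
              hf_mono _ hP _ (hscale _ hQ lam hlam1) ih.1
            have s2 : lam • f (f^[tt] (u + s • y p))
                - f (lam • f^[tt] (u + s • y p)) ∈ C := hf_subhom _ hQ lam hlam1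
            have hd : lam • f (f^[tt] (u + s • y p)) - f (f^[tt] (u + y q))
                = (lam • f (f^[tt] (u + s • y p)) - f (lam • f^[tt] (u + s • y p)))
                  + (f (lam • f^[tt] (u + s • y p)) - f (f^[tt] (u + y q))) := by abel
            rw [hd]
            exact hCadd _ s2 _ s1
          · rw [Function.iterate_succ_apply', Function.iterate_succ_apply']
            have s1 : f (lam • f^[tt] (u + y q)) - f (f^[tt] (u + s • y p)) ∈ C :=
              hf_mono _ hQ _ (hscale _ hP lam hlam1) ih.2
            have s2 : lam • f (f^[tt] (u + y q))
                - f (lam • f^[tt] (u + y q)) ∈ C := hf_subhom _ hP lam hlam1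
            have hd : lam • f (f^[tt] (u + y q)) - f (f^[tt] (u + s • y p))
                = (lam • f (f^[tt] (u + y q)) - f (lam • f^[tt] (u + y q)))
                  + (f (lam • f^[tt] (u + y q)) - f (f^[tt] (u + s • y p))) := by abel
            rw [hd]
            exact hCadd _ s2 _ s1
      -- extraction at time M
      have hNpT : N (y (p + M)) < N (y p)/2048 := hM (p+M) (by omega)
      have hc1M : lam • (u + s • y (p+M)) - (u + y (q+M)) ∈ C := by
        have h := (hpair M).1
        rwa [hseg M, hPrw M] at h
      have hc2M : lam • (u + y (q+M)) - (u + s • y (p+M)) ∈ C := by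
        have h := (hpair M).2
        rwa [hseg M, hPrw M] at h
      set β : ℝ := (lam - 1) + lam * (s * N (y (p+M))) with hβdef
      have hβ0 : 0 ≤ β := by
        rw [hβdef]
        have : 0 ≤ lam * (s * N (y (p+M))) := by
          refine mul_nonneg (by linarith) (mul_nonneg (le_of_lt hs0) (hN0 _))
        linarith
      have hup : β • u - y (q+M) ∈ C := by
        have h2 : (lam * s) • (N (y (p+M)) • u - y (p+M)) ∈ C :=
          hC_cone _ (hNmem _).2.1 _ (mul_nonneg (by linarith) (le_of_lt hs0))
        have hd : β • u - y (q+M)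
            = (lam • (u + s • y (p+M)) - (u + y (q+M)))
              + (lam * s) • (N (y (p+M)) • u - y (p+M)) := by
          rw [hβdef]; module
        rw [hd]
        exact hCadd _ hc1M _ h2
      have hdown : β • u + y (q+M) ∈ C := by
        have hlamne : lam ≠ 0 := by linarith
        have h2 : s • (N (y (p+M)) • u + y (p+M)) ∈ C :=
          hC_cone _ (hNmem _).2.2 s (le_of_lt hs0)
        have h3 : ((lam - 1)^2 + (lam^2 - 1) * (s * N (y (p+M)))) • u ∈ C := by
          refine hC_cone _ huC _ ?_
          have h4 : 0 ≤ (lam - 1)^2 := sq_nonneg _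
          have h5 : 0 ≤ (lam^2 - 1) * (s * N (y (p+M))) := by
            refine mul_nonneg ?_ (mul_nonneg (le_of_lt hs0) (hN0 _))
            nlinarith
          linarith
        have hw : lam • (β • u + y (q+M)) ∈ C := by
          have hd : lam • (β • u + y (q+M))
              = ((lam • (u + y (q+M)) - (u + s • y (p+M)))
                  + s • (N (y (p+M)) • u + y (p+M)))
                + ((lam - 1)^2 + (lam^2 - 1) * (s * N (y (p+M)))) • u := by
            rw [hβdef]; module
          rw [hd]
          exact hCadd _ (hCadd _ hc2M _ h2) _ h3
        have hback : β • u + y (q+M) = lam⁻¹ • (lam • (β • u + y (q+M))) :=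
          (inv_smul_smul₀ hlamne _).symm
        rw [hback]
        exact hC_cone _ hw _ (by positivity)
      have hNqM : N (y (q+M)) ≤ β := hNle _ _ ⟨hβ0, hup, hdown⟩
      have hβle : β ≤ N (y q) / 512 := by
        have hlam2 : lam ≤ 2 := by
          rw [hlamdef]; nlinarith
        have h1 : lam - 1 ≤ N (y q) / 1024 := by rw [hlamdef]; linarith
        have h2 : s * N (y (p+M)) ≤ N (y q) / 2048 := by
          have h3 : s * N (y (p+M)) ≤ s * (N (y p)/2048) :=
            mul_le_mul_of_nonneg_left (le_of_lt hNpT) (le_of_lt hs0)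
          have h4 : s * (N (y p)/2048) = N (y q) / 2048 := by
            rw [← hsNp]; ring
          linarith
        have h5 : lam * (s * N (y (p+M))) ≤ 2 * (N (y q) / 2048) := by
          have h6 : 0 ≤ s * N (y (p+M)) := mul_nonneg (le_of_lt hs0) (hN0 _)
          nlinarith
        rw [hβdef]
        linarith
      -- lower bound from near-monotonicity of the orbit
      have hqj : N (y q)/32 < N (y (q + φ n)) := hK2 (φ n)
      have hTle : M ≤ φ n := le_trans (le_max_right J M) hφ.le_apply
      have l1 : N (y (q + φ n)) ≤ a (q + φ n) := haN _ (by omega)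
      have l2 : a (q + φ n) ≤ a (q + M) := haMono' (q+M) (q+φ n) (by omega) (by omega)
      have l3 : a (q + M) ≤ 2 * N (y (q+M)) := haN2 _ (by omega)
      nlinarith [hNq]
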